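/- arXiv:2411.00775 — 2 statements merged into one kernel-verified Lean document; each statement's English description precedes it below -/
import Mathlib

section
/- For a positive semidefinite symmetric matrix Σ in R^{d×d}, the trace of its square root is at most the sum of the square roots of its diagonal entries: tr(Σ^{1/2}) ≤ Σ_{i=1}^d Σ_{ii}^{1/2}. -/
open Matrix BigOperators

/-- For a positive semidefinite symmetric real matrix `S`, the trace of its (unique
positive semidefinite) square root is at most the sum of the square roots of its
diagonal entries: `tr(S^{1/2}) ≤ ∑ i, S i i ^ (1/2)`. -/
theorem trace_sqrt_le_sum_sqrt_diag {d : ℕ} (S : Matrix (Fin d) (Fin d) ℝ)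
    (hS : S.PosSemidef) :
    (hS.1.eigenvectorUnitary.1 * diagonal ((RCLike.ofReal : ℝ → ℝ) ∘ (fun x : ℝ => √x) ∘ hS.1.eigenvalues) *
      (star hS.1.eigenvectorUnitary : Matrix (Fin d) (Fin d) ℝ)).trace ≤ ∑ i, Real.sqrt (S i i) := by
  set R := (hS.1.eigenvectorUnitary.1 * diagonal ((RCLike.ofReal : ℝ → ℝ) ∘ (fun x : ℝ => √x) ∘ hS.1.eigenvalues) *
      (star hS.1.eigenvectorUnitary : Matrix (Fin d) (Fin d) ℝ)) with hR
  open scoped MatrixOrder in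
  have hR' : R = CFC.sqrt S := by
    rw [CFC.sqrt_eq_cfc, cfc_nnreal_eq_real _ S hS.nonneg, hS.1.cfc_eq]
    simp only [IsHermitian.cfc, Unitary.conjStarAlgAut_apply, Real.coe_sqrt, Real.coe_toNNReal', hR]
    congr 3
    funext x
    simp [max_eq_left (hS.eigenvalues_nonneg x)]
  open scoped MatrixOrder in
  have hRps : R.PosSemidef := hR' ▸ (CFC.sqrt_nonneg S).posSemidef
  have hdiag : ∀ i, 0 ≤ R i i := fun i => hRps.diag_nonneg
  open scoped MatrixOrder in
  have hmul : R * R = S := hR' ▸ CFC.sqrt_mul_sqrt_self S hS.nonneg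
  rw [Matrix.trace]
  apply Finset.sum_le_sum
  intro i _
  have hSi : S i i = ∑ k, R i k * R k i := by
    rw [← hmul]; rfl
  have hsq : (R i i) ^ 2 ≤ S i i := by
    rw [hSi]
    have : ∀ k, R i k * R k i = (R i k) ^ 2 := fun k => by
      rw [show R k i = R i k by simpa using (hRps.1.apply i k)]; ring
    simp_rw [this]
    exact Finset.single_le_sum (f := fun k => (R i k)^2) (fun k _ => sq_nonneg _) (Finset.mem_univ i)
  calc R.diag i = Real.sqrt ((R i i) ^ 2) := by
        rw [Real.sqrt_sq (hdiag i)]; rfl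
    _ ≤ Real.sqrt (S i i) := Real.sqrt_le_sqrt hsq
end

section
/- Conditioning preserves indistinguishability up to rescaling: if random variables Y and Y′ over a space 𝒴 satisfy P[Y ∈ W] ≤ e^ε P[Y′ ∈ W] and P[Y′ ∈ W] ≤ e^ε P[Y ∈ W] for all measurable W, and E ⊆ 𝒴 is an event with P[Y ∈ E] ≥ q and P[Y′ ∈ E] ≥ q, then the conditional distributions Y|E and Y′|E are (ε/q)-indistinguishable, i.e., for all measurable W, P[Y ∈ W | Y ∈ E] ≤ e^{ε/q} P[Y′ ∈ W | Y′ ∈ E] and symmetrically. -/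
open MeasureTheory ProbabilityTheory
open scoped ENNReal

lemma exp_convex_key (ε q : ℝ) (hq : 0 < q) (hq1 : q ≤ 1) :
    Real.exp ε - 1 ≤ q * (Real.exp (ε / q) - 1) := by
  have h := convexOn_exp.2 (Set.mem_univ (ε / q)) (Set.mem_univ (0 : ℝ))
    (le_of_lt hq) (by linarith : (0:ℝ) ≤ 1 - q) (by ring)
  simp only [smul_eq_mul, mul_zero, add_zero, Real.exp_zero] at h
  have hqε : q * (ε / q) = ε := by field_simp
  rw [hqε] at h
  linarith

lemma ratio_key (ε q pE qE : ℝ) (hε : 0 ≤ ε) (hq : 0 < q) (hq1 : q ≤ 1)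
    (hpq : q ≤ pE) (hqE1 : qE ≤ 1)
    (hcomp : 1 - pE ≤ Real.exp ε * (1 - qE)) :
    Real.exp ε * qE ≤ Real.exp (ε / q) * pE := by
  have heq : (0:ℝ) < Real.exp ε := Real.exp_pos _
  have heq2 : (0:ℝ) < Real.exp (ε / q) := Real.exp_pos _
  have h1 : Real.exp ε ≤ Real.exp (ε / q) := by
    apply Real.exp_le_exp.2
    rw [le_div_iff₀ hq]; nlinarith
  rcases le_or_gt (Real.exp ε * qE) (Real.exp (ε / q) * q) with h | h
  · calc Real.exp ε * qE ≤ Real.exp (ε / q) * q := h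
      _ ≤ Real.exp (ε / q) * pE := by nlinarith
  · have hkey := exp_convex_key ε q hq hq1
    have hne : (0:ℝ) ≤ Real.exp (ε / q) - 1 := by
      have := Real.one_le_exp (by positivity : (0:ℝ) ≤ ε / q); linarith
    have hh1 := mul_le_mul_of_nonneg_right h.le hne
    have hh2 := mul_le_mul_of_nonneg_left hkey heq2.le
    have : Real.exp ε * qE ≤ Real.exp (ε / q) * (1 - Real.exp ε * (1 - qE)) := by
      nlinarith
    calc Real.exp ε * qE ≤ Real.exp (ε / q) * (1 - Real.exp ε * (1 - qE)) := this
      _ ≤ Real.exp (ε / q) * pE := by nlinarith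

lemma cond_le_aux {𝒴 : Type*} [MeasurableSpace 𝒴]
    (P Q : Measure 𝒴) [IsProbabilityMeasure P] [IsProbabilityMeasure Q]
    (ε q : ℝ) (hε : 0 ≤ ε) (hq : 0 < q)
    (E : Set 𝒴) (hE : MeasurableSet E)
    (hPE : ENNReal.ofReal q ≤ P E) (hQE : ENNReal.ofReal q ≤ Q E)
    (W : Set 𝒴)
    (hPW : P (E ∩ W) ≤ ENNReal.ofReal (Real.exp ε) * Q (E ∩ W))
    (hPEc : P Eᶜ ≤ ENNReal.ofReal (Real.exp ε) * Q Eᶜ) :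
    (P[|E]) W ≤ ENNReal.ofReal (Real.exp (ε / q)) * (Q[|E]) W := by
  have hPEfin : P E ≠ ∞ := measure_ne_top _ _
  have hQEfin : Q E ≠ ∞ := measure_ne_top _ _
  have hq0 : (0:ℝ≥0∞) < ENNReal.ofReal q := ENNReal.ofReal_pos.2 hq
  have hPE0 : P E ≠ 0 := (lt_of_lt_of_le hq0 hPE).ne'
  have hQE0 : Q E ≠ 0 := (lt_of_lt_of_le hq0 hQE).ne'
  -- real versions
  set pE := (P E).toReal with hpEdef
  set qE := (Q E).toReal with hqEdef
  set pW := (P (E ∩ W)).toReal with hpWdef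
  set qW := (Q (E ∩ W)).toReal with hqWdef
  have hpEpos : 0 < pE := ENNReal.toReal_pos hPE0 hPEfin
  have hqEpos : 0 < qE := ENNReal.toReal_pos hQE0 hQEfin
  have hqpE : q ≤ pE := (ENNReal.ofReal_le_iff_le_toReal hPEfin).1 hPE
  have hqqE : q ≤ qE := (ENNReal.ofReal_le_iff_le_toReal hQEfin).1 hQE
  have hpE1 : pE ≤ 1 := by
    have := prob_le_one (μ := P) (s := E)
    simpa using ENNReal.toReal_mono (by norm_num) this
  have hqE1 : qE ≤ 1 := by
    have := prob_le_one (μ := Q) (s := E)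
    simpa using ENNReal.toReal_mono (by norm_num) this
  have hq1 : q ≤ 1 := hqpE.trans hpE1
  have hqWnn : 0 ≤ qW := ENNReal.toReal_nonneg
  -- hPW in reals
  have hPWr : pW ≤ Real.exp ε * qW := by
    have h := ENNReal.toReal_mono
      (by exact ENNReal.mul_ne_top ENNReal.ofReal_ne_top (measure_ne_top _ _)) hPW
    rwa [ENNReal.toReal_mul, ENNReal.toReal_ofReal (Real.exp_nonneg _)] at h
  -- complement in reals
  have hPEcr : 1 - pE ≤ Real.exp ε * (1 - qE) := by
    have hPc : (P Eᶜ).toReal = 1 - pE := by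
      rw [prob_compl_eq_one_sub hE, ENNReal.toReal_sub_of_le (prob_le_one) (by norm_num)]
      norm_num
      rfl
    have hQc : (Q Eᶜ).toReal = 1 - qE := by
      rw [prob_compl_eq_one_sub hE, ENNReal.toReal_sub_of_le (prob_le_one) (by norm_num)]
      norm_num
      rfl
    have h := ENNReal.toReal_mono
      (by exact ENNReal.mul_ne_top ENNReal.ofReal_ne_top (measure_ne_top _ _)) hPEc
    rwa [ENNReal.toReal_mul, ENNReal.toReal_ofReal (Real.exp_nonneg _), hPc, hQc] at h
  have hratio := ratio_key ε q pE qE hε hq hq1 hqpE hqE1 hPEcr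
  -- the real-valued goal
  have hrgoal : pE⁻¹ * pW ≤ Real.exp (ε / q) * (qE⁻¹ * qW) := by
    rw [inv_mul_eq_div, div_le_iff₀ hpEpos]
    have h2 : Real.exp ε * qW * qE ≤ Real.exp (ε/q) * pE * qW := by nlinarith
    calc pW ≤ Real.exp ε * qW := hPWr
      _ = Real.exp ε * qW * qE * qE⁻¹ := by field_simp
      _ ≤ Real.exp (ε/q) * pE * qW * qE⁻¹ := by
          apply mul_le_mul_of_nonneg_right h2 (by positivity)
      _ = Real.exp (ε / q) * (qE⁻¹ * qW) * pE := by ring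
  -- back to ENNReal
  rw [cond_apply hE, cond_apply hE]
  have hA : (P E)⁻¹ * P (E ∩ W) ≠ ∞ :=
    ENNReal.mul_ne_top (ENNReal.inv_ne_top.2 hPE0) (measure_ne_top _ _)
  have hB : ENNReal.ofReal (Real.exp (ε / q)) * ((Q E)⁻¹ * Q (E ∩ W)) ≠ ∞ :=
    ENNReal.mul_ne_top ENNReal.ofReal_ne_top
      (ENNReal.mul_ne_top (ENNReal.inv_ne_top.2 hQE0) (measure_ne_top _ _))
  rw [← ENNReal.toReal_le_toReal hA hB]
  rw [ENNReal.toReal_mul, ENNReal.toReal_mul, ENNReal.toReal_mul, ENNReal.toReal_inv,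
    ENNReal.toReal_inv, ENNReal.toReal_ofReal (Real.exp_nonneg _)]
  exact hrgoal

/-- Conditioning preserves indistinguishability up to rescaling: if the laws `P`, `Q` of
`Y`, `Y'` are `(ε, 0)`-indistinguishable and `E` is an event with `P E ≥ q` and
`Q E ≥ q`, then the conditional laws `P[·|E]` and `Q[·|E]` are `(ε/q, 0)`-indistinguishable. -/
theorem cond_indistinguishable {𝒴 : Type*} [MeasurableSpace 𝒴]
    (P Q : Measure 𝒴) [IsProbabilityMeasure P] [IsProbabilityMeasure Q]
    (ε q : ℝ) (hε : 0 ≤ ε) (hq : 0 < q)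
    (hind : ∀ W : Set 𝒴, MeasurableSet W →
      P W ≤ ENNReal.ofReal (Real.exp ε) * Q W ∧
        Q W ≤ ENNReal.ofReal (Real.exp ε) * P W)
    (E : Set 𝒴) (hE : MeasurableSet E)
    (hPE : ENNReal.ofReal q ≤ P E) (hQE : ENNReal.ofReal q ≤ Q E) :
    ∀ W : Set 𝒴, MeasurableSet W →
      (P[|E]) W ≤ ENNReal.ofReal (Real.exp (ε / q)) * (Q[|E]) W ∧
        (Q[|E]) W ≤ ENNReal.ofReal (Real.exp (ε / q)) * (P[|E]) W := by
  intro W hW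
  constructor
  · exact cond_le_aux P Q ε q hε hq E hE hPE hQE W
      ((hind (E ∩ W) (hE.inter hW)).1) ((hind Eᶜ hE.compl).1)
  · exact cond_le_aux Q P ε q hε hq E hE hQE hPE W
      ((hind (E ∩ W) (hE.inter hW)).2) ((hind Eᶜ hE.compl).2)
end
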